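/- Let K be a field and f(X) in K[X] a monic odd polynomial (i.e., f(X) lies in X·K[X^2]). If f(X) = g(h(X)) for g, h in K[X] with char(K) not dividing deg(g), then there exists a degree-one polynomial ρ(X) in K[X] such that both g(ρ(X)) and ρ^{-1}(h(X)) are monic polynomials in X·K[X^2]. -/

import Mathlib

open Polynomial

def OddPoly {K : Type} [Field K] (p : Polynomial K) : Prop :=
  ∀ n : ℕ, Even n → p.coeff n = 0

/-- even polynomial: all odd coefficients vanish -/
def EvenPoly {K : Type} [Field K] (p : Polynomial K) : Prop :=
  ∀ n : ℕ, ¬ Even n → p.coeff n = 0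

section helpers
variable {K : Type} [Field K]

lemma arith_main (j n d m : ℕ) (h3 : 3 ≤ j) (hjn : j ≤ n) (hd1 : 1 ≤ d) (hdm : d < m) :
    j * d + (n - j) * m < (n - 1) * m + d := by
  obtain ⟨j', rfl⟩ : ∃ j', j = j' + 3 := ⟨j - 3, by omega⟩
  obtain ⟨e, rfl⟩ : ∃ e, n = (j' + 3) + e := ⟨n - (j' + 3), by omega⟩
  have hs1 : (j' + 3) + e - (j' + 3) = e := by omega
  have hs2 : (j' + 3) + e - 1 = j' + 2 + e := by omega
  rw [hs1, hs2]
  nlinarith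

lemma even_mul_even {p q : Polynomial K} (hp : EvenPoly p) (hq : EvenPoly q) :
    EvenPoly (p * q) := by
  intro n hn
  rw [coeff_mul]
  apply Finset.sum_eq_zero
  rintro ⟨i, j⟩ hij
  rw [Finset.HasAntidiagonal.mem_antidiagonal] at hij
  rcases Nat.even_or_odd i with hi | hi
  · have hj : ¬ Even j := by
      rw [Nat.even_iff] at *; omega
    rw [hq j hj, mul_zero]
  · rw [hp i (Nat.not_even_iff_odd.mpr hi), zero_mul]

lemma even_mul_odd {p q : Polynomial K} (hp : EvenPoly p) (hq : OddPoly q) :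
    OddPoly (p * q) := by
  intro n hn
  rw [coeff_mul]
  apply Finset.sum_eq_zero
  rintro ⟨i, j⟩ hij
  rw [Finset.HasAntidiagonal.mem_antidiagonal] at hij
  rcases Nat.even_or_odd i with hi | hi
  · have hj : Even j := by rw [Nat.even_iff] at *; omega
    rw [hq j hj, mul_zero]
  · rw [hp i (Nat.not_even_iff_odd.mpr hi), zero_mul]

lemma odd_mul_odd {p q : Polynomial K} (hp : OddPoly p) (hq : OddPoly q) :
    EvenPoly (p * q) := by
  intro n hn
  rw [coeff_mul]
  apply Finset.sum_eq_zero
  rintro ⟨i, j⟩ hij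
  rw [Finset.HasAntidiagonal.mem_antidiagonal] at hij
  rcases Nat.even_or_odd i with hi | hi
  · rw [hp i hi, zero_mul]
  · have hj : Even j := by rw [Nat.even_iff, Nat.odd_iff] at *; omega
    rw [hq j hj, mul_zero]

lemma even_one : EvenPoly (1 : Polynomial K) := by
  intro n hn
  rw [coeff_one, if_neg]
  rintro rfl
  exact hn (Even.zero)

lemma even_pow {p : Polynomial K} (hp : EvenPoly p) (k : ℕ) : EvenPoly (p ^ k) := by
  induction k with
  | zero => simpa using even_one
  | succ k ih => rw [pow_succ]; exact even_mul_even ih hp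

lemma odd_pow {p : Polynomial K} (hp : OddPoly p) :
    ∀ k : ℕ, (Even k → EvenPoly (p ^ k)) ∧ (Odd k → OddPoly (p ^ k)) := by
  intro k
  induction k with
  | zero =>
    constructor
    · intro _; simpa using even_one
    · intro hk; exact absurd hk (by simp)
  | succ k ih =>
    constructor
    · intro hk
      have hkodd : Odd k := by rw [Nat.odd_iff]; rw [Nat.even_iff] at hk; omega
      rw [pow_succ]
      exact odd_mul_odd (ih.2 hkodd) hp
    · intro hk
      have hkeven : Even k := by rw [Nat.even_iff]; rw [Nat.odd_iff] at hk; omega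
      rw [pow_succ]
      exact even_mul_odd (ih.1 hkeven) hp

/-- Key lemma: all even-index coefficients of `h` with index ≥ 1 vanish. -/
lemma key_even_coeff (f g h : Polynomial K)
    (hmonic : f.Monic) (hodd : OddPoly f) (hcomp : f = g.comp h)
    (hchar : ¬ (ringChar K ∣ g.natDegree)) :
    ∀ k, Even k → 1 ≤ k → h.coeff k = 0 := by
  set n := g.natDegree with hn
  set m := h.natDegree with hm
  have hn0 : n ≠ 0 := fun e => hchar (e ▸ dvd_zero _)
  have hg0 : g ≠ 0 := fun e => hn0 (by simp [hn, e])
  have hfdeg : f.natDegree = n * m := by rw [hcomp, natDegree_comp]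
  have hfodd : Odd f.natDegree := by
    rw [Nat.odd_iff, ← Nat.not_even_iff]
    intro he
    have := hodd _ he
    rw [hmonic.coeff_natDegree] at this
    exact one_ne_zero this
  have hnm : Odd n ∧ Odd m := Nat.odd_mul.mp (hfdeg ▸ hfodd)
  have hnodd := hnm.1
  have hmodd := hnm.2
  have hm0 : m ≠ 0 := fun e => by simp [e] at hmodd
  have hh0 : h ≠ 0 := fun e => hm0 (by simp [hm, e])
  by_contra hcon
  push_neg at hcon
  obtain ⟨k, hk_even, hk1, hkne⟩ := hcon
  -- even part of h
  set h₀ : Polynomial K :=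
    ∑ j ∈ Finset.range (m + 1), if Even j then monomial j (h.coeff j) else 0 with hh₀
  set h₁ : Polynomial K := h - h₀ with hh₁
  have c₀ : ∀ j, h₀.coeff j = if Even j then h.coeff j else 0 := by
    intro j
    rw [hh₀, finset_sum_coeff]
    rw [Finset.sum_eq_single j]
    · split_ifs with hj
      · simp [hj, coeff_monomial]
      · simp [hj]
    · intro b _ hbj
      split_ifs with hb
      · simp [coeff_monomial, hbj]
      · simp
    · intro hj
      have hj' : m < j := by simpa using hj
      have : h.coeff j = 0 := coeff_eq_zero_of_natDegree_lt hj'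
      split_ifs <;> simp [this, coeff_monomial]
  have c₁ : ∀ j, h₁.coeff j = if Even j then 0 else h.coeff j := by
    intro j
    rw [hh₁, coeff_sub, c₀]
    split_ifs <;> ring
  have hE0 : EvenPoly h₀ := fun j hj => by rw [c₀, if_neg hj]
  have hO1 : OddPoly h₁ := fun j hj => by rw [c₁, if_pos hj]
  have h₀ne : h₀ ≠ 0 := by
    intro e
    apply hkne
    have := c₀ k
    rw [e] at this
    simp [hk_even] at this
    exact this.symm
  set d : ℕ := h₀.natDegree with hd
  have hd_coeff : h₀.coeff d ≠ 0 := by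
    rw [← leadingCoeff]
    exact leadingCoeff_ne_zero.mpr h₀ne
  have hdeven : Even d := by
    by_contra hde
    rw [c₀ d, if_neg hde] at hd_coeff
    exact hd_coeff rfl
  have hhd : h.coeff d ≠ 0 := by
    rw [c₀ d, if_pos hdeven] at hd_coeff
    exact hd_coeff
  have hd1 : 1 ≤ d := by
    have : k ≤ d := le_natDegree_of_ne_zero (by rw [c₀ k, if_pos hk_even]; exact hkne)
    omega
  have hdm : d < m := by
    have h1 : d ≤ m := le_natDegree_of_ne_zero hhd
    have h2 : d ≠ m := by
      intro e
      rw [Nat.even_iff] at hdeven; rw [Nat.odd_iff] at hmodd; omega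
    omega
  -- h₁ has degree m and leading coeff = leading coeff of h
  have hc₁m : h₁.coeff m = h.coeff m := by
    rw [c₁, if_neg (Nat.not_even_iff_odd.mpr hmodd)]
  have hhm : h.coeff m ≠ 0 := by
    rw [hm, ← leadingCoeff]; exact leadingCoeff_ne_zero.mpr hh0
  have h₁deg : h₁.natDegree = m := by
    apply le_antisymm
    · rw [natDegree_le_iff_coeff_eq_zero]
      intro N hN
      rw [c₁]
      have : h.coeff N = 0 := coeff_eq_zero_of_natDegree_lt hN
      split_ifs <;> simp [this]
    · exact le_natDegree_of_ne_zero (by rw [hc₁m]; exact hhm)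
  have h₁lc : h₁.leadingCoeff = h.coeff m := by
    rw [leadingCoeff, h₁deg, hc₁m]
  set D : ℕ := (n - 1) * m + d with hD
  have hDeven : Even D := by
    have h1 : Even ((n - 1) * m) := (Nat.Odd.sub_odd hnodd odd_one).mul_right m
    exact h1.add hdeven
  have hfD : f.coeff D = 0 := hodd D hDeven
  -- compute f.coeff D
  have step1 : f.coeff D = ∑ i ∈ g.support, g.coeff i * (h ^ i).coeff D := by
    rw [hcomp, comp_eq_sum_left, Polynomial.sum_def, finset_sum_coeff]
    simp only [coeff_C_mul]
  have step2 : f.coeff D = g.coeff n * (h ^ n).coeff D := by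
    rw [step1, Finset.sum_eq_single n]
    · intro i hi hin
      have hile : i ≤ n := le_natDegree_of_mem_supp i hi
      have hilt : i < n := lt_of_le_of_ne hile hin
      have : (h ^ i).natDegree < D := by
        rw [natDegree_pow, ← hm]
        calc i * m ≤ (n - 1) * m := Nat.mul_le_mul_right m (by omega)
          _ < D := by omega
      rw [coeff_eq_zero_of_natDegree_lt this, mul_zero]
    · intro hns
      rw [notMem_support_iff.mp hns, zero_mul]
  have hsplit : h = h₀ + h₁ := by rw [hh₁]; ring
  have step3 : (h ^ n).coeff D =
      (h₀ * h₁ ^ (n - 1)).coeff D * (n : K) := by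
    rw [hsplit, add_pow, finset_sum_coeff]
    rw [Finset.sum_eq_single 1]
    · rw [pow_one, Nat.choose_one_right, ← C_eq_natCast, coeff_mul_C]
    · intro j hj hj1
      have hjn : j ≤ n := by
        rw [Finset.mem_range] at hj; omega
      rw [← C_eq_natCast, coeff_mul_C]
      rcases Nat.even_or_odd j with hje | hjo
      · -- n - j is odd, so h₀^j * h₁^(n-j) is odd, coeff at even D is 0
        have hnj : Odd (n - j) := by
          rw [Nat.odd_iff] at *; rw [Nat.even_iff] at hje; omega
        have : OddPoly (h₀ ^ j * h₁ ^ (n - j)) :=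
          even_mul_odd (even_pow hE0 j) ((odd_pow hO1 (n - j)).2 hnj)
        rw [this D hDeven, zero_mul]
      · -- j odd, j ≥ 3 : degree too small
        have hj3 : 3 ≤ j := by rw [Nat.odd_iff] at hjo; omega
        have hdegle : (h₀ ^ j * h₁ ^ (n - j)).natDegree ≤ j * d + (n - j) * m := by
          refine le_trans (natDegree_mul_le) ?_
          gcongr
          · refine le_trans (natDegree_pow_le) ?_
            rw [hd]
          · refine le_trans (natDegree_pow_le) ?_
            rw [h₁deg]
        have harith : j * d + (n - j) * m < D := by
          rw [hD]
          exact arith_main j n d m hj3 hjn hd1 hdm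
        rw [coeff_eq_zero_of_natDegree_lt (lt_of_le_of_lt hdegle harith), zero_mul]
    · intro h1m
      exfalso
      apply h1m
      rw [Finset.mem_range]
      omega
  have main : (h₀ * h₁ ^ (n - 1)).coeff D = h₀.leadingCoeff * h.coeff m ^ (n - 1) := by
    have hDeq : D = h₀.natDegree + (h₁ ^ (n - 1)).natDegree := by
      rw [natDegree_pow, h₁deg, ← hd, hD]; omega
    rw [hDeq, coeff_mul_degree_add_degree, leadingCoeff_pow, h₁lc]
  have hnK : (n : K) ≠ 0 := by
    intro e
    exact hchar ((CharP.cast_eq_zero_iff K (ringChar K) n).mp e)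
  have hglc : g.coeff n ≠ 0 := by
    rw [hn, ← leadingCoeff]; exact leadingCoeff_ne_zero.mpr hg0
  rw [step2, step3, main] at hfD
  have : h₀.leadingCoeff ≠ 0 := leadingCoeff_ne_zero.mpr h₀ne
  have : g.coeff n * (h₀.leadingCoeff * h.coeff m ^ (n - 1) * (n : K)) ≠ 0 := by
    apply mul_ne_zero hglc
    apply mul_ne_zero (mul_ne_zero this (pow_ne_zero _ hhm)) hnK
  exact this hfD

/-- If `f = G ∘ H` with `H` monic odd of positive degree and `f` odd, then `G` is odd. -/
lemma odd_of_comp (f G H : Polynomial K) (hodd : OddPoly f) (hH : OddPoly H)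
    (hHm : H.Monic) (hm1 : 1 ≤ H.natDegree) (hcomp : f = G.comp H) : OddPoly G := by
  intro i hi
  by_contra hne
  set T : Finset ℕ := G.support.filter (fun j => Even j) with hT
  have hiT : i ∈ T := by
    rw [hT, Finset.mem_filter]
    exact ⟨mem_support_iff.mpr hne, hi⟩
  have hTne : T.Nonempty := ⟨i, hiT⟩
  set i₀ : ℕ := T.max' hTne with hi₀
  have hi₀T : i₀ ∈ T := T.max'_mem hTne
  have hi₀even : Even i₀ := (Finset.mem_filter.mp hi₀T).2
  have hi₀supp : i₀ ∈ G.support := (Finset.mem_filter.mp hi₀T).1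
  have hi₀ne : G.coeff i₀ ≠ 0 := mem_support_iff.mp hi₀supp
  set m := H.natDegree with hm
  set D : ℕ := i₀ * m with hD
  have hDeven : Even D := hi₀even.mul_right m
  have step1 : f.coeff D = ∑ j ∈ G.support, G.coeff j * (H ^ j).coeff D := by
    rw [hcomp, comp_eq_sum_left, Polynomial.sum_def, finset_sum_coeff]
    simp only [coeff_C_mul]
  have step2 : f.coeff D = G.coeff i₀ * (H ^ i₀).coeff D := by
    rw [step1, Finset.sum_eq_single i₀]
    · intro j hj hji₀
      rcases Nat.even_or_odd j with hje | hjo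
      · have hjT : j ∈ T := by
          rw [hT, Finset.mem_filter]; exact ⟨hj, hje⟩
        have hjle : j ≤ i₀ := T.le_max' j hjT
        have hjlt : j < i₀ := lt_of_le_of_ne hjle hji₀
        have : (H ^ j).natDegree < D := by
          rw [natDegree_pow, ← hm, hD]
          exact Nat.mul_lt_mul_of_lt_of_le hjlt (le_refl m) (by omega)
        rw [coeff_eq_zero_of_natDegree_lt this, mul_zero]
      · have : OddPoly (H ^ j) := (odd_pow hH j).2 hjo
        rw [this D hDeven, mul_zero]
    · intro hns
      exact absurd hi₀supp hns
  have hpowmonic : (H ^ i₀).Monic := hHm.pow i₀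
  have : (H ^ i₀).coeff D = 1 := by
    have : (H ^ i₀).natDegree = D := by rw [natDegree_pow, hD]
    rw [← this]
    exact hpowmonic.coeff_natDegree
  rw [this, mul_one] at step2
  exact hi₀ne (step2 ▸ hodd D hDeven)

end helpers

theorem statement5 (K : Type) [Field K] (f g h : Polynomial K)
    (hmonic : f.Monic) (hodd : OddPoly f) (hcomp : f = g.comp h)
    (hchar : ¬ (ringChar K ∣ g.natDegree)) :
    ∃ ρ σ : Polynomial K, ρ.degree = 1 ∧ σ.degree = 1 ∧
      ρ.comp σ = Polynomial.X ∧ σ.comp ρ = Polynomial.X ∧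
      (g.comp ρ).Monic ∧ OddPoly (g.comp ρ) ∧
      (σ.comp h).Monic ∧ OddPoly (σ.comp h) := by
  have hkey := key_even_coeff f g h hmonic hodd hcomp hchar
  set n := g.natDegree with hn
  set m := h.natDegree with hm
  have hn0 : n ≠ 0 := fun e => hchar (e ▸ dvd_zero _)
  have hfdeg : f.natDegree = n * m := by rw [hcomp, natDegree_comp]
  have hfodd : Odd f.natDegree := by
    rw [Nat.odd_iff, ← Nat.not_even_iff]
    intro he
    have := hodd _ he
    rw [hmonic.coeff_natDegree] at this
    exact one_ne_zero this
  have hnm : Odd n ∧ Odd m := Nat.odd_mul.mp (hfdeg ▸ hfodd)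
  have hm0 : m ≠ 0 := fun e => by have := hnm.2; simp [e] at this
  have hh0 : h ≠ 0 := fun e => hm0 (by simp [hm, e])
  set a : K := h.leadingCoeff with ha
  have ha0 : a ≠ 0 := leadingCoeff_ne_zero.mpr hh0
  have ha0' : a⁻¹ ≠ 0 := inv_ne_zero ha0
  set b : K := h.coeff 0 with hb
  set ρ : Polynomial K := C a * X + C b with hρ
  set σ : Polynomial K := C a⁻¹ * X + C (-(a⁻¹ * b)) with hσ
  have hρdeg : ρ.degree = 1 := degree_linear ha0
  have hσdeg : σ.degree = 1 := degree_linear ha0'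
  have hρnat : ρ.natDegree = 1 := natDegree_linear ha0
  have hσnat : σ.natDegree = 1 := natDegree_linear ha0'
  have hρσ : ρ.comp σ = X := by
    rw [hρ, hσ]
    simp only [add_comp, mul_comp, C_comp, X_comp, mul_add, ← mul_assoc, ← C_mul]
    rw [mul_inv_cancel₀ ha0, C_1, one_mul]
    have h1 : a * -(a⁻¹ * b) = -b := by
      rw [mul_neg, ← mul_assoc, mul_inv_cancel₀ ha0, one_mul]
    rw [h1, add_assoc, ← C_add, neg_add_cancel, C_0, add_zero]
  have hσρ : σ.comp ρ = X := by
    rw [hρ, hσ]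
    simp only [add_comp, mul_comp, C_comp, X_comp, mul_add, ← mul_assoc, ← C_mul]
    rw [inv_mul_cancel₀ ha0, C_1, one_mul]
    have h1 : a⁻¹ * b + -(a⁻¹ * b) = 0 := by ring
    rw [add_assoc, ← C_add, h1, C_0, add_zero]
  have hσh : σ.comp h = C a⁻¹ * h + C (-(a⁻¹ * b)) := by
    rw [hσ]
    simp only [add_comp, mul_comp, C_comp, X_comp]
  have hHcoeff : ∀ j, (σ.comp h).coeff j =
      a⁻¹ * h.coeff j + (if j = 0 then -(a⁻¹ * b) else 0) := by
    intro j
    rw [hσh, coeff_add, coeff_C_mul, coeff_C]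
  have hHodd : OddPoly (σ.comp h) := by
    intro j hj
    rcases Nat.eq_zero_or_pos j with rfl | hj1
    · rw [hHcoeff, if_pos rfl, ← hb]; ring
    · rw [hHcoeff, if_neg (by omega), hkey j hj (by omega), mul_zero, add_zero]
  have hHdeg : (σ.comp h).natDegree = m := by
    rw [natDegree_comp, hσnat, one_mul]
  have hHmonic : (σ.comp h).Monic := by
    rw [Monic, leadingCoeff, hHdeg, hHcoeff, if_neg hm0]
    rw [← leadingCoeff, ← ha, inv_mul_cancel₀ ha0, add_zero]
  have hflc : g.leadingCoeff * a ^ n = 1 := by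
    have := leadingCoeff_comp (p := g) (q := h) (by rw [← hm]; exact hm0)
    rw [← hcomp] at this
    rw [← this, hmonic.leadingCoeff]
  have hρlc : ρ.leadingCoeff = a := by
    rw [leadingCoeff, hρnat, hρ]
    simp [coeff_C]
  have hGmonic : (g.comp ρ).Monic := by
    rw [Monic, leadingCoeff_comp (by rw [hρnat]; omega), hρlc, ← hn, hflc]
  have hGHf : f = (g.comp ρ).comp (σ.comp h) := by
    rw [comp_assoc, ← comp_assoc ρ σ h, hρσ, X_comp, ← hcomp]
  have hGodd : OddPoly (g.comp ρ) :=
    odd_of_comp f (g.comp ρ) (σ.comp h) hodd hHodd hHmonic (by rw [hHdeg]; omega) hGHf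
  exact ⟨ρ, σ, hρdeg, hσdeg, hρσ, hσρ, hGmonic, hGodd, hHmonic, hHodd⟩
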